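/- Let G be a block graph of order p and diameter d(G) ≥ 2. Then rn(G) = (p−1)(d(G)+ε(G)) − 2L(G) + ε(G) holds if and only if there exists an ordering u_0, u_1, …, u_{p−1} of the vertices of G such that L(u_0) + L(u_{p−1}) = ε(G) and for all 0 ≤ i < j ≤ p−1: d(u_i,u_j) ≥ Σ_{t=i}^{j−1} [L(u_t) + L(u_{t+1})] − (j−i)(d(G)+ε(G)) + d(G) + 1. -/

import Mathlib

open scoped Classical

namespace RadioLabeling

variable {V : Type*} [Fintype V]

/-- The diameter of a graph: maximum distance between two vertices. -/
noncomputable def diam (G : SimpleGraph V) : ℕ :=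
  Finset.univ.sup fun p : V × V => G.dist p.1 p.2

/-- A vertex set `S` induces a 2-connected subgraph: the induced subgraph is connected
and contains no cut-vertex. -/
def TwoConn (G : SimpleGraph V) (S : Set V) : Prop :=
  (G.induce S).Connected ∧ ∀ v ∈ S, (S \ {v} : Set V) = ∅ ∨ (G.induce (S \ {v})).Connected

/-- A block: a maximal 2-connected induced subgraph. -/
def IsBlock (G : SimpleGraph V) (S : Set V) : Prop :=
  TwoConn G S ∧ ∀ T : Set V, S ⊆ T → TwoConn G T → T = S

/-- A block graph: a connected graph each of whose blocks is a clique. -/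
def IsBlockGraph (G : SimpleGraph V) : Prop :=
  G.Connected ∧ ∀ S : Set V, IsBlock G S → G.IsClique S

/-- The weight of `G` at `v`: the sum of distances from `v` to all vertices. -/
noncomputable def wt (G : SimpleGraph V) (v : V) : ℕ := ∑ u : V, G.dist u v

/-- The set of weight centers: vertices minimizing the weight. -/
def weightCenters (G : SimpleGraph V) : Set V := {v | ∀ u : V, wt G v ≤ wt G u}

/-- `nCloser G v u` = number of vertices strictly closer to `v` than to `u`. -/
noncomputable def nCloser (G : SimpleGraph V) (v u : V) : ℕ :=
  (Finset.univ.filter fun z => G.dist v z < G.dist u z).card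

/-- A central vertex: either the unique weight center, or (when there are at least two
weight centers) a vertex of the central block, i.e. of a block containing all weight centers. -/
def IsCentral (G : SimpleGraph V) (w : V) : Prop :=
  weightCenters G = {w} ∨
    (2 ≤ (weightCenters G).ncard ∧
      ∃ S : Set V, IsBlock G S ∧ weightCenters G ⊆ S ∧ w ∈ S)

/-- The level of a vertex: its distance to a nearest central vertex. -/
noncomputable def level (G : SimpleGraph V) (v : V) : ℕ :=
  sInf {n | ∃ w, IsCentral G w ∧ G.dist v w = n}

/-- The total level of `G`. -/
noncomputable def totalLevel (G : SimpleGraph V) : ℕ := ∑ v : V, level G v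

/-- `eps G = 1` if `G` has a unique weight center, `0` otherwise. -/
noncomputable def eps (G : SimpleGraph V) : ℕ :=
  if (weightCenters G).ncard = 1 then 1 else 0

/-- A radio labeling: `|f u - f v| ≥ diam G + 1 - dist u v` for all distinct `u`, `v`. -/
def IsRadioLabeling (G : SimpleGraph V) (f : V → ℕ) : Prop :=
  ∀ u v : V, u ≠ v → diam G + 1 ≤ G.dist u v + max (f u - f v) (f v - f u)

/-- The span of a labeling: the maximum difference of two labels. -/
noncomputable def span (f : V → ℕ) : ℕ :=
  Finset.univ.sup fun p : V × V => f p.1 - f p.2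

/-- The radio number: minimum span of a radio labeling. -/
noncomputable def rn (G : SimpleGraph V) : ℕ :=
  sInf {s | ∃ f : V → ℕ, IsRadioLabeling G f ∧ span f = s}

/-- `G` achieves the lower bound `(p-1)(d(G)+ε(G)) - 2L(G) + ε(G)` for the radio number. -/
def lbEq (G : SimpleGraph V) : Prop :=
  (rn G : ℤ) =
    ((Fintype.card V : ℤ) - 1) * ((diam G : ℤ) + (eps G : ℤ)) -
      2 * (totalLevel G : ℤ) + (eps G : ℤ)

/-- A lower bound block graph: a block graph whose radio number equals the lower bound. -/
def IsLowerBoundBlockGraph (G : SimpleGraph V) : Prop := IsBlockGraph G ∧ lbEq G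

/-- `x` lies on a `(u,v)`-geodesic. -/
def OnGeodesic (G : SimpleGraph V) (x u v : V) : Prop :=
  G.dist u v = G.dist u x + G.dist x v

/-- `x` is an ancestor of `v` (and `v` a descendent of `x`): `x` lies on the geodesic
from some central vertex to `v`. -/
def IsAncestor (G : SimpleGraph V) (x v : V) : Prop :=
  ∃ w : V, IsCentral G w ∧ OnGeodesic G x w v

/-- `phi G u v`: the maximum level of a common ancestor of `u` and `v`. -/
noncomputable def phi (G : SimpleGraph V) (u v : V) : ℕ :=
  sSup {n | ∃ x, IsAncestor G x u ∧ IsAncestor G x v ∧ level G x = n}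

/-- `delta G u v = 1` iff the `(u,v)`-geodesic contains two central vertices. -/
noncomputable def delta (G : SimpleGraph V) (u v : V) : ℕ :=
  if ∃ x y : V, x ≠ y ∧ IsCentral G x ∧ IsCentral G y ∧
      OnGeodesic G x u v ∧ OnGeodesic G y u v
    then 1 else 0

/-- `rho G u v = 0` iff the `(u,v)`-geodesic contains a central vertex or a common
ancestor of `u` and `v`. -/
noncomputable def rho (G : SimpleGraph V) (u v : V) : ℕ :=
  if ∃ x : V, OnGeodesic G x u v ∧
      (IsCentral G x ∨ (IsAncestor G x u ∧ IsAncestor G x v))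
    then 0 else 1

/-- The central block: a block containing at least two weight centers, all of them. -/
def IsCentralBlock (G : SimpleGraph V) (D : Set V) : Prop :=
  IsBlock G D ∧ 2 ≤ (weightCenters G).ncard ∧ weightCenters G ⊆ D

/-- `v` belongs to the branch of `G` determined by the non-central block `D` adjacent to the
central vertex `w`: `v` is a vertex of `D` other than `w`, or a descendent of such a vertex. -/
def InBranch (G : SimpleGraph V) (w : V) (D : Set V) (v : V) : Prop :=
  IsCentral G w ∧ IsBlock G D ∧ w ∈ D ∧ ¬ IsCentralBlock G D ∧
    ∃ u ∈ D, u ≠ w ∧ IsAncestor G u v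

/-- Two vertices are in different branches: branches induced by two different blocks
adjacent to the same central vertex. -/
def DifferentBranches (G : SimpleGraph V) (u v : V) : Prop :=
  ∃ w D₁ D₂, D₁ ≠ D₂ ∧ InBranch G w D₁ u ∧ InBranch G w D₂ v

/-- Two vertices are in opposite branches: branches induced by blocks adjacent to two
different central vertices. -/
def OppositeBranches (G : SimpleGraph V) (u v : V) : Prop :=
  ∃ w₁ w₂ D₁ D₂, w₁ ≠ w₂ ∧ InBranch G w₁ D₁ u ∧ InBranch G w₂ D₂ v

/-- Two vertices lie in the same branch. -/
def SameBranch (G : SimpleGraph V) (u v : V) : Prop :=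
  ∃ w D, InBranch G w D u ∧ InBranch G w D v


set_option linter.unusedSectionVars false

section Lemmas


/-- Walk in `G` with support in `T` gives reachability in the induced graph. -/
lemma reach_induce {G : SimpleGraph V} {T : Set V} :
    ∀ {a b : V} (p : G.Walk a b), (∀ z ∈ p.support, z ∈ T) →
      ∀ (ha : a ∈ T) (hb : b ∈ T), (G.induce T).Reachable ⟨a, ha⟩ ⟨b, hb⟩ := by
  intro a b p
  induction p with
  | nil => intro _ ha hb; rfl
  | cons h q ih =>
    rename_i x y z
    intro hsup hx hz
    have hy : y ∈ T := hsup y (by simp [SimpleGraph.Walk.support_cons])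
    have h1 : (G.induce T).Adj ⟨x, hx⟩ ⟨y, hy⟩ := by
      simp only [SimpleGraph.comap_adj, Function.Embedding.coe_subtype]
      exact h
    exact (h1.reachable).trans (ih (fun w hw => hsup w (by simp [SimpleGraph.Walk.support_cons, hw])) hy hz)

/-- A set with a "hub" vertex adjacent (or equal) to everything is connected. -/
lemma connected_of_hub {G : SimpleGraph V} {S : Set V} (hub : V) (hhub : hub ∈ S)
    (h : ∀ a ∈ S, a = hub ∨ G.Adj a hub) : (G.induce S).Connected := by
  rw [SimpleGraph.connected_iff]
  refine ⟨?_, ⟨⟨hub, hhub⟩⟩⟩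
  have key : ∀ a : S, (G.induce S).Reachable a ⟨hub, hhub⟩ := by
    rintro ⟨a, ha⟩
    rcases h a ha with rfl | hadj
    · rfl
    · exact SimpleGraph.Adj.reachable (by
        simp only [SimpleGraph.comap_adj, Function.Embedding.coe_subtype]
        exact hadj)
  intro a b
  exact (key a).trans (key b).symm


set_option linter.unusedSectionVars false

variable {G : SimpleGraph V}

/-- A nontrivial clique is 2-connected. -/
lemma twoConn_of_clique {S : Set V} (hC : G.IsClique S) (h2 : S.Nontrivial) :
    TwoConn G S := by
  obtain ⟨c1, hc1, c2, hc2, hne⟩ := h2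
  constructor
  · refine connected_of_hub c1 hc1 (fun a ha => ?_)
    rcases eq_or_ne a c1 with rfl | h
    · exact Or.inl rfl
    · exact Or.inr (hC ha hc1 h)
  · intro w hw
    right
    have : ∃ c ∈ S, c ≠ w := by
      rcases eq_or_ne c1 w with rfl | h
      · exact ⟨c2, hc2, hne.symm⟩
      · exact ⟨c1, hc1, h⟩
    obtain ⟨c, hc, hcw⟩ := this
    refine connected_of_hub c ⟨hc, hcw⟩ (fun a ha => ?_)
    rcases eq_or_ne a c with rfl | h
    · exact Or.inl rfl
    · exact Or.inr (hC ha.1 hc h)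

/-- Every 2-connected set extends to a block. -/
lemma exists_block_superset {S : Set V} (hS : TwoConn G S) :
    ∃ B : Set V, IsBlock G B ∧ S ⊆ B := by
  have main : ∀ n (S : Set V), TwoConn G S → Fintype.card V ≤ S.ncard + n →
      ∃ B : Set V, IsBlock G B ∧ S ⊆ B := by
    intro n
    induction n with
    | zero =>
      intro S hS hcard
      refine ⟨S, ⟨hS, fun T hST hT => ?_⟩, subset_rfl⟩
      have h1 : T.ncard ≤ S.ncard := by
        have := Set.ncard_le_ncard (Set.subset_univ T) Set.finite_univ
        simpa [Set.ncard_univ] using le_trans this (by simpa [Set.ncard_univ] using hcard)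
      exact (Set.eq_of_subset_of_ncard_le hST h1 (Set.toFinite T)).symm
    | succ n ih =>
      intro S hS hcard
      by_cases hmax : ∀ T : Set V, S ⊆ T → TwoConn G T → T = S
      · exact ⟨S, ⟨hS, hmax⟩, subset_rfl⟩
      · push_neg at hmax
        obtain ⟨T, hST, hT, hTne⟩ := hmax
        have hlt : S.ncard < T.ncard :=
          Set.ncard_lt_ncard (ssubset_of_subset_of_ne hST (Ne.symm hTne)) (Set.toFinite T)
        exact (ih T hT (by omega)).imp (fun B hB => ⟨hB.1, hST.trans hB.2⟩)
  exact main (Fintype.card V) S hS (by omega)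

/-- Two blocks of a block graph sharing two vertices coincide. -/
lemma block_eq_of_two_mem (hG : IsBlockGraph G) {S1 S2 : Set V}
    (hB1 : IsBlock G S1) (hB2 : IsBlock G S2) {c1 c2 : V} (hne : c1 ≠ c2)
    (h11 : c1 ∈ S1) (h21 : c2 ∈ S1) (h12 : c1 ∈ S2) (h22 : c2 ∈ S2) : S1 = S2 := by
  have K1 : G.IsClique S1 := hG.2 S1 hB1
  have K2 : G.IsClique S2 := hG.2 S2 hB2
  have hub_prop : ∀ w ∈ S1 ∪ S2, ∀ a ∈ S1 ∪ S2, ∀ hub, hub ∈ S1 → hub ∈ S2 →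
      a = hub ∨ G.Adj a hub := by
    intro w _ a ha hub hh1 hh2
    rcases eq_or_ne a hub with rfl | h
    · exact Or.inl rfl
    · rcases ha with ha | ha
      · exact Or.inr (K1 ha hh1 h)
      · exact Or.inr (K2 ha hh2 h)
  have hTC : TwoConn G (S1 ∪ S2) := by
    constructor
    · refine connected_of_hub c1 (Or.inl h11) (fun a ha => ?_)
      exact hub_prop c1 (Or.inl h11) a ha c1 h11 h12
    · intro w hw
      right
      have : ∃ hub, hub ∈ S1 ∧ hub ∈ S2 ∧ hub ≠ w := by
        rcases eq_or_ne c1 w with rfl | h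
        · exact ⟨c2, h21, h22, hne.symm⟩
        · exact ⟨c1, h11, h12, h⟩
      obtain ⟨hub, hh1, hh2, hhw⟩ := this
      refine connected_of_hub hub ⟨Or.inl hh1, hhw⟩ (fun a ha => ?_)
      exact hub_prop w hw a ha.1 hub hh1 hh2
  have h1 : S1 ∪ S2 = S1 := hB1.2 (S1 ∪ S2) Set.subset_union_left hTC
  have h2 : S2 ⊆ S1 := by rw [← h1]; exact Set.subset_union_right
  exact hB2.2 S1 h2 hB1.1

/-- In a block graph, two vertices at distance ≥ 2 are separated by a cut vertex. -/
lemma exists_separator (hG : IsBlockGraph G) {a b : V} (h2 : 2 ≤ G.dist a b) :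
    ∃ x : V, x ≠ a ∧ x ≠ b ∧ ∀ p : G.Walk a b, x ∈ p.support := by
  have hab : a ≠ b := by
    rintro rfl; simp [SimpleGraph.dist_self] at h2
  by_contra hcon
  push_neg at hcon
  set S : Set V := {z | ∃ p : G.Walk a b, p.IsPath ∧ z ∈ p.support} with hSdef
  obtain ⟨w0⟩ := hG.1.preconnected a b
  have ha : a ∈ S := ⟨w0.bypass, w0.bypass_isPath, w0.bypass.start_mem_support⟩
  have hb : b ∈ S := ⟨w0.bypass, w0.bypass_isPath, w0.bypass.end_mem_support⟩
  have hTC : TwoConn G S := by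
    constructor
    · rw [SimpleGraph.connected_iff]
      refine ⟨?_, ⟨⟨a, ha⟩⟩⟩
      have key : ∀ z : S, (G.induce S).Reachable z ⟨a, ha⟩ := by
        rintro ⟨z, p, hp, hz⟩
        have ht : ∀ y ∈ (p.takeUntil z hz).support, y ∈ S :=
          fun y hy => ⟨p, hp, p.support_takeUntil_subset hz hy⟩
        exact (reach_induce (p.takeUntil z hz) ht ha ⟨p, hp, hz⟩).symm
      intro u v; exact (key u).trans (key v).symm
    · intro w hw
      right
      rw [SimpleGraph.connected_iff]
      set T : Set V := S \ {w} with hTdef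
      have main : ∀ z (hzT : z ∈ T),
          (∃ haT : a ∈ T, (G.induce T).Reachable ⟨z, hzT⟩ ⟨a, haT⟩) ∨
          (∃ hbT : b ∈ T, (G.induce T).Reachable ⟨z, hzT⟩ ⟨b, hbT⟩) := by
        rintro z ⟨hzS, hzw⟩
        have hzw' : z ≠ w := fun h => hzw (by simp [h])
        obtain ⟨p, hp, hz⟩ := hzS
        set t := p.takeUntil z hz with htdef
        set q := p.dropUntil z hz with hqdef
        have hsp : t.append q = p := p.take_spec hz
        have hnd : (t.support ++ q.support.tail).Nodup := by
          rw [← SimpleGraph.Walk.support_append, hsp]; exact hp.support_nodup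
        have hdisj : t.support.Disjoint q.support.tail := (List.nodup_append'.mp hnd).2.2
        have hts : ∀ y ∈ t.support, y ∈ S :=
          fun y hy => ⟨p, hp, p.support_takeUntil_subset hz hy⟩
        have hqs : ∀ y ∈ q.support, y ∈ S :=
          fun y hy => ⟨p, hp, p.support_dropUntil_subset hz hy⟩
        have hzS' : z ∈ S := ⟨p, hp, hz⟩
        by_cases hwt : w ∈ t.support
        · right
          have hwq : w ∉ q.support := by
            intro hwq
            have hq : q.support = z :: q.support.tail := q.support_eq_cons
            rcases List.mem_cons.mp (hq ▸ hwq) with h | h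
            · exact hzw' h.symm
            · exact hdisj hwt h
          have hqT : ∀ y ∈ q.support, y ∈ T :=
            fun y hy => ⟨hqs y hy, fun h => hwq (by rwa [Set.mem_singleton_iff.mp h] at hy)⟩
          have hbT : b ∈ T := hqT b q.end_mem_support
          exact ⟨hbT, reach_induce q hqT ⟨hzS', hzw⟩ hbT⟩
        · left
          have htT : ∀ y ∈ t.support, y ∈ T :=
            fun y hy => ⟨hts y hy, fun h => hwt (by rwa [Set.mem_singleton_iff.mp h] at hy)⟩
          have haT : a ∈ T := htT a t.start_mem_support
          exact ⟨haT, (reach_induce t htT haT ⟨hzS', hzw⟩).symm⟩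
      rcases em (a ∈ T) with haT | haT
      · rcases em (b ∈ T) with hbT | hbT
        · have hwa : w ≠ a := fun h => haT.2 (Set.mem_singleton_iff.mpr h.symm)
          have hwb : w ≠ b := fun h => hbT.2 (Set.mem_singleton_iff.mpr h.symm)
          obtain ⟨p1, hp1⟩ := hcon w hwa hwb
          have hwp' : w ∉ p1.bypass.support := fun hy => hp1 (p1.support_bypass_subset hy)
          have hT' : ∀ y ∈ p1.bypass.support, y ∈ T := fun y hy =>
            ⟨⟨p1.bypass, p1.bypass_isPath, hy⟩,
              fun hh => hwp' (by rwa [Set.mem_singleton_iff.mp hh] at hy)⟩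
          have rab : (G.induce T).Reachable ⟨a, haT⟩ ⟨b, hbT⟩ :=
            reach_induce p1.bypass hT' haT hbT
          refine ⟨?_, ⟨⟨a, haT⟩⟩⟩
          have key : ∀ z : T, (G.induce T).Reachable z ⟨a, haT⟩ := by
            rintro ⟨z, hzT⟩
            rcases main z hzT with ⟨h, r⟩ | ⟨h, r⟩
            · exact r
            · exact r.trans rab.symm
          intro u v; exact (key u).trans (key v).symm
        · refine ⟨?_, ⟨⟨a, haT⟩⟩⟩
          have key : ∀ z : T, (G.induce T).Reachable z ⟨a, haT⟩ := by
            rintro ⟨z, hzT⟩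
            rcases main z hzT with ⟨h, r⟩ | ⟨h, r⟩
            · exact r
            · exact absurd h hbT
          intro u v; exact (key u).trans (key v).symm
      · have hbT : b ∈ T := by
          refine ⟨hb, fun h => ?_⟩
          have hwa : w = a := by
            by_contra hwa
            exact haT ⟨ha, fun h' => hwa (Set.mem_singleton_iff.mp h').symm⟩
          have hba : b = a := (Set.mem_singleton_iff.mp h).trans hwa
          exact hab hba.symm
        refine ⟨?_, ⟨⟨b, hbT⟩⟩⟩
        have key : ∀ z : T, (G.induce T).Reachable z ⟨b, hbT⟩ := by
          rintro ⟨z, hzT⟩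
          rcases main z hzT with ⟨h, r⟩ | ⟨h, r⟩
          · exact absurd h haT
          · exact r
        intro u v; exact (key u).trans (key v).symm
  obtain ⟨B, hB, hSB⟩ := exists_block_superset hTC
  have hadj : G.Adj a b := hG.2 B hB (hSB ha) (hSB hb) hab
  have := SimpleGraph.dist_eq_one_iff_adj.mpr hadj
  omega

lemma dist_split (hc : G.Connected) {u x z : V} (hz : ∀ p : G.Walk u z, x ∈ p.support) :
    G.dist u z = G.dist u x + G.dist x z := by
  refine le_antisymm (hc.dist_triangle) ?_
  obtain ⟨p, hp⟩ := (hc.preconnected u z).exists_walk_length_eq_dist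
  have hx := hz p
  have h1 : G.dist u x ≤ (p.takeUntil x hx).length := SimpleGraph.dist_le _
  have h2 : G.dist x z ≤ (p.dropUntil x hx).length := SimpleGraph.dist_le _
  have h3 := congrArg SimpleGraph.Walk.length (p.take_spec hx)
  rw [SimpleGraph.Walk.length_append] at h3
  omega

lemma card_half (hc : G.Connected) {u x : V} (hu : u ∈ weightCenters G) (hux : u ≠ x) :
    Fintype.card V ≤ 2 * (Finset.univ.filter fun z => ∃ p : G.Walk u z, x ∉ p.support).card := by
  set C := Finset.univ.filter fun z => ∃ p : G.Walk u z, x ∉ p.support with hCdef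
  have hdpos : 0 < G.dist u x := hc.pos_dist_of_ne hux
  have key : ∀ z : V, (G.dist z x : ℤ) ≤
      G.dist z u + (if z ∈ C then (G.dist u x : ℤ) else -(G.dist u x)) := by
    intro z
    by_cases hz : z ∈ C
    · rw [if_pos hz]
      exact_mod_cast hc.dist_triangle (u := z) (v := u) (w := x)
    · rw [if_neg hz]
      have hall : ∀ p : G.Walk u z, x ∈ p.support := by
        by_contra hp; push_neg at hp
        exact hz (by simp only [hCdef, Finset.mem_filter, Finset.mem_univ, true_and]; exact hp)
      have h4 := dist_split hc hall
      have e1 : G.dist z x = G.dist x z := SimpleGraph.dist_comm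
      have e2 : G.dist z u = G.dist u z := SimpleGraph.dist_comm
      rw [e1, e2]
      push_cast
      omega
  have hsum : (wt G x : ℤ) ≤ (wt G u : ℤ) +
      ((G.dist u x : ℤ) * C.card - (G.dist u x : ℤ) * (Finset.univ \ C).card) := by
    have h1 : (wt G x : ℤ) = ∑ z : V, (G.dist z x : ℤ) := by simp [wt]
    have h2 : (wt G u : ℤ) = ∑ z : V, (G.dist z u : ℤ) := by simp [wt]
    rw [h1, h2]
    have := Finset.sum_le_sum (fun z (_ : z ∈ Finset.univ) => key z)
    rw [Finset.sum_add_distrib] at this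
    refine le_trans this ?_
    rw [add_le_add_iff_left]
    rw [Finset.sum_ite, Finset.sum_const, Finset.sum_const]
    simp only [nsmul_eq_mul]
    have hfilter1 : Finset.univ.filter (fun z => z ∈ C) = C := by
      ext z; simp
    have hfilter2 : Finset.univ.filter (fun z => ¬ z ∈ C) = Finset.univ \ C := by
      ext z; simp
    rw [hfilter1, hfilter2]
    ring_nf
    omega
  have hwt : wt G u ≤ wt G x := hu x
  have hcards : C.card + (Finset.univ \ C).card = Fintype.card V := by
    rw [Finset.card_sdiff_of_subset (Finset.subset_univ C), Finset.card_univ]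
    have := Finset.card_le_card (Finset.subset_univ C)
    rw [Finset.card_univ] at this
    omega
  nlinarith [hsum, hwt, hdpos, hcards]

lemma centers_dist_le_one (hG : IsBlockGraph G) {c1 c2 : V}
    (h1 : c1 ∈ weightCenters G) (h2 : c2 ∈ weightCenters G) : G.dist c1 c2 ≤ 1 := by
  by_contra hcon
  push_neg at hcon
  obtain ⟨x, hx1, hx2, hsep⟩ := exists_separator hG (by omega : 2 ≤ G.dist c1 c2)
  set C1 := Finset.univ.filter fun z => ∃ p : G.Walk c1 z, x ∉ p.support with hC1
  set C2 := Finset.univ.filter fun z => ∃ p : G.Walk c2 z, x ∉ p.support with hC2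
  have hhalf1 : Fintype.card V ≤ 2 * C1.card := card_half hG.1 h1 (Ne.symm hx1)
  have hhalf2 : Fintype.card V ≤ 2 * C2.card := card_half hG.1 h2 (Ne.symm hx2)
  have hdisj : Disjoint C1 C2 := by
    rw [Finset.disjoint_left]
    intro z hz1 hz2
    obtain ⟨p1, hp1⟩ := (Finset.mem_filter.mp hz1).2
    obtain ⟨p2, hp2⟩ := (Finset.mem_filter.mp hz2).2
    have := hsep (p1.append p2.reverse)
    rcases (SimpleGraph.Walk.mem_support_append_iff _ _).mp this with h | h
    · exact hp1 h
    · exact hp2 (by rwa [SimpleGraph.Walk.support_reverse, List.mem_reverse] at h)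
  have hxnot : x ∉ C1 ∪ C2 := by
    intro hx
    rcases Finset.mem_union.mp hx with h | h
    · obtain ⟨p, hp⟩ := (Finset.mem_filter.mp h).2
      exact hp p.end_mem_support
    · obtain ⟨p, hp⟩ := (Finset.mem_filter.mp h).2
      exact hp p.end_mem_support
  have hsub : C1 ∪ C2 ⊆ Finset.univ.erase x := by
    intro z hz
    exact Finset.mem_erase.mpr ⟨fun h => hxnot (h ▸ hz), Finset.mem_univ z⟩
  have hcard : C1.card + C2.card ≤ Fintype.card V - 1 := by
    have h1' := Finset.card_le_card hsub
    rw [Finset.card_union_of_disjoint hdisj] at h1'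
    rw [Finset.card_erase_of_mem (Finset.mem_univ x), Finset.card_univ] at h1'
    exact h1'
  have hpos : 0 < Fintype.card V := Fintype.card_pos_iff.mpr ⟨c1⟩
  omega

lemma weightCenters_nonempty [Nonempty V] : (weightCenters G).Nonempty := by
  obtain ⟨w, -, hw⟩ := Finset.exists_min_image Finset.univ (wt G) ⟨Classical.arbitrary V, Finset.mem_univ _⟩
  exact ⟨w, fun u => hw u (Finset.mem_univ u)⟩

lemma weightCenters_clique (hG : IsBlockGraph G) : G.IsClique (weightCenters G) := by
  intro x hx y hy hxy
  have h1 : G.dist x y ≤ 1 := centers_dist_le_one hG hx hy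
  have h2 : 0 < G.dist x y := hG.1.pos_dist_of_ne hxy
  exact SimpleGraph.dist_eq_one_iff_adj.mp (by omega)

/-- Central vertices exist and any two of them are within distance `1 - eps`. -/
lemma central_structure (hG : IsBlockGraph G) [Nonempty V] :
    (∃ w, IsCentral G w) ∧
    (∀ w1 w2, IsCentral G w1 → IsCentral G w2 → (G.dist w1 w2 : ℤ) ≤ 1 - eps G) := by
  have hWne : (weightCenters G).Nonempty := weightCenters_nonempty
  by_cases h1 : (weightCenters G).ncard = 1
  · obtain ⟨w, hW⟩ := Set.ncard_eq_one.mp h1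
    have hcen : ∀ x, IsCentral G x ↔ x = w := by
      intro x
      constructor
      · rintro (h | ⟨hn, -⟩)
        · rw [hW] at h
          exact (Set.singleton_eq_singleton_iff.mp h.symm)
        · rw [hW] at hn; simp [Set.ncard_singleton] at hn
      · rintro rfl; exact Or.inl hW
    refine ⟨⟨w, (hcen w).mpr rfl⟩, ?_⟩
    intro w1 w2 hw1 hw2
    rw [(hcen w1).mp hw1, (hcen w2).mp hw2]
    simp [SimpleGraph.dist_self, eps, h1]
  · have hpos : 0 < (weightCenters G).ncard := (Set.ncard_pos (Set.toFinite _)).mpr hWne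
    have h2 : 2 ≤ (weightCenters G).ncard := by omega
    obtain ⟨c1, c2, hc1, hc2, hne⟩ := (Set.one_lt_ncard_iff (Set.toFinite _)).mp h2
    have hclique := weightCenters_clique hG
    have hTC : TwoConn G (weightCenters G) := twoConn_of_clique hclique ⟨c1, hc1, c2, hc2, hne⟩
    obtain ⟨B, hB, hWB⟩ := exists_block_superset hTC
    refine ⟨⟨c1, Or.inr ⟨h2, B, hB, hWB, hWB hc1⟩⟩, ?_⟩
    intro w1 w2 hw1 hw2
    have heps : eps G = 0 := by simp [eps, h1]
    rw [heps]
    have hS : ∀ w, IsCentral G w → ∃ S, IsBlock G S ∧ weightCenters G ⊆ S ∧ w ∈ S := by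
      rintro w (h | ⟨-, S, hS⟩)
      · exfalso; rw [h] at h1; simp [Set.ncard_singleton] at h1
      · exact ⟨S, hS⟩
    obtain ⟨S1, hB1, hWS1, hw1S⟩ := hS w1 hw1
    obtain ⟨S2, hB2, hWS2, hw2S⟩ := hS w2 hw2
    have hSeq : S1 = S2 :=
      block_eq_of_two_mem hG hB1 hB2 hne (hWS1 hc1) (hWS1 hc2) (hWS2 hc1) (hWS2 hc2)
    have hK : G.IsClique S1 := hG.2 S1 hB1
    rcases eq_or_ne w1 w2 with rfl | hww
    · simp [SimpleGraph.dist_self]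
    · have hadj : G.Adj w1 w2 := hK hw1S (hSeq ▸ hw2S) hww
      have := SimpleGraph.dist_eq_one_iff_adj.mpr hadj
      simp [this]
lemma level_exists (hc : ∃ w, IsCentral G w) (v : V) :
    ∃ w, IsCentral G w ∧ G.dist v w = level G v := by
  have hne : {n | ∃ w, IsCentral G w ∧ G.dist v w = n}.Nonempty := by
    obtain ⟨w, hw⟩ := hc
    exact ⟨G.dist v w, w, hw, rfl⟩
  exact Nat.sInf_mem hne

lemma level_le (v w : V) (hw : IsCentral G w) : level G v ≤ G.dist v w :=
  Nat.sInf_le ⟨w, hw, rfl⟩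

/-- Key inequality: `d(u,v) + eps ≤ L(u) + L(v) + 1`. -/
lemma key_ineq (hG : IsBlockGraph G) [Nonempty V] (u v : V) :
    (G.dist u v : ℤ) + eps G ≤ level G u + level G v + 1 := by
  obtain ⟨hex, hclose⟩ := central_structure hG
  obtain ⟨wu, hwu, hu⟩ := level_exists hex u
  obtain ⟨wv, hwv, hv⟩ := level_exists hex v
  have h1 : G.dist u v ≤ G.dist u wu + G.dist wu v := hG.1.dist_triangle
  have h2 : G.dist wu v ≤ G.dist wu wv + G.dist wv v := hG.1.dist_triangle
  have h3 := hclose wu wv hwu hwv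
  have e1 : G.dist wv v = G.dist v wv := SimpleGraph.dist_comm
  rw [← hu, ← hv, ← e1]
  push_cast at h3 ⊢
  omega

/-- When there is a unique weight center, the level is the distance to it. -/
lemma eps_one_level (hG : IsBlockGraph G) (h1 : (weightCenters G).ncard = 1) :
    ∃ w, (∀ v, level G v = G.dist v w) ∧ (∀ v, level G v = 0 → v = w) := by
  obtain ⟨w, hW⟩ := Set.ncard_eq_one.mp h1
  have hcen : ∀ x, IsCentral G x ↔ x = w := by
    intro x
    constructor
    · rintro (h | ⟨hn, -⟩)
      · rw [hW] at h
        exact (Set.singleton_eq_singleton_iff.mp h.symm)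
      · rw [hW] at hn; simp [Set.ncard_singleton] at hn
    · rintro rfl; exact Or.inl hW
  have hlev : ∀ v, level G v = G.dist v w := by
    intro v
    have : {n | ∃ x, IsCentral G x ∧ G.dist v x = n} = {G.dist v w} := by
      ext n
      simp only [Set.mem_setOf_eq, Set.mem_singleton_iff]
      constructor
      · rintro ⟨x, hx, rfl⟩; rw [(hcen x).mp hx]
      · rintro rfl; exact ⟨w, (hcen w).mpr rfl, rfl⟩
    rw [level, this, csInf_singleton]
  refine ⟨w, hlev, fun v hv => ?_⟩
  rw [hlev v] at hv
  by_contra hne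
  have := hG.1.pos_dist_of_ne hne
  omega

lemma dist_le_diam (u v : V) : G.dist u v ≤ diam G :=
  Finset.le_sup (f := fun p : V × V => G.dist p.1 p.2) (Finset.mem_univ (u, v))

lemma two_le_card (hd : 2 ≤ diam G) : 2 ≤ Fintype.card V := by
  by_contra h
  push_neg at h
  have hsub : Subsingleton V := Fintype.card_le_one_iff_subsingleton.mp (by omega)
  have : diam G = 0 := by
    refine Nat.eq_zero_of_le_zero (Finset.sup_le fun p _ => ?_)
    rw [Subsingleton.elim p.1 p.2, SimpleGraph.dist_self]
  omega

lemma radio_injective (f : V → ℕ) (hf : IsRadioLabeling G f) : Function.Injective f := by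
  intro a b hab
  by_contra hne
  have h1 := hf a b hne
  have h2 := dist_le_diam (G := G) a b
  rw [hab] at h1
  simp at h1
  omega

lemma span_eq_of_min_max {f : V → ℕ} {a b : V} (hmin : ∀ v, f a ≤ f v)
    (hmax : ∀ v, f v ≤ f b) : span f = f b - f a := by
  refine le_antisymm (Finset.sup_le fun p _ => ?_)
    (Finset.le_sup (f := fun p : V × V => f p.1 - f p.2) (Finset.mem_univ (b, a)))
  have := hmax p.1
  have := hmin p.2
  omega

lemma rn_spec (hd : 2 ≤ diam G) :
    ∃ f : V → ℕ, IsRadioLabeling G f ∧ span f = rn G := by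
  have : ∃ f : V → ℕ, IsRadioLabeling G f := by
    refine ⟨fun v => (Fintype.equivFin V v : ℕ) * (diam G + 1), ?_⟩
    intro a b hne
    set e := Fintype.equivFin V
    have hene : (e a : ℕ) ≠ (e b : ℕ) := by
      intro h
      exact hne (e.injective (Fin.ext h))
    have hmax : diam G + 1 ≤ max ((e a : ℕ) * (diam G + 1) - (e b : ℕ) * (diam G + 1))
        ((e b : ℕ) * (diam G + 1) - (e a : ℕ) * (diam G + 1)) := by
      rcases Nat.lt_or_ge (e a : ℕ) (e b : ℕ) with h | h
      · refine le_trans ?_ (le_max_right _ _)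
        have : (e b : ℕ) * (diam G + 1) - (e a : ℕ) * (diam G + 1)
            = ((e b : ℕ) - (e a : ℕ)) * (diam G + 1) := (Nat.sub_mul _ _ _).symm
        rw [this]
        nlinarith [Nat.sub_pos_of_lt h]
      · have hlt : (e b : ℕ) < (e a : ℕ) := by omega
        refine le_trans ?_ (le_max_left _ _)
        have : (e a : ℕ) * (diam G + 1) - (e b : ℕ) * (diam G + 1)
            = ((e a : ℕ) - (e b : ℕ)) * (diam G + 1) := (Nat.sub_mul _ _ _).symm
        rw [this]
        nlinarith [Nat.sub_pos_of_lt hlt]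
    exact le_trans hmax (Nat.le_add_left _ _)
  obtain ⟨f, hf⟩ := this
  have hne : {s | ∃ f : V → ℕ, IsRadioLabeling G f ∧ span f = s}.Nonempty :=
    ⟨span f, f, hf, rfl⟩
  obtain ⟨f', hf', hs⟩ := Nat.sInf_mem hne
  exact ⟨f', hf', hs⟩

lemma exists_sorted [Nonempty V] (f : V → ℕ) :
    ∃ u : ℕ → V, Function.Bijective (fun i : Fin (Fintype.card V) => u i) ∧
      (∀ i j : ℕ, i ≤ j → j ≤ Fintype.card V - 1 → f (u i) ≤ f (u j)) ∧
      (∀ i j : ℕ, i < j → j ≤ Fintype.card V - 1 → u i ≠ u j) := by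
  set p := Fintype.card V with hp
  have hp1 : 0 < p := Fintype.card_pos
  set e : Fin p ≃ V := (Fintype.equivFin V).symm with he
  set σ := Tuple.sort (f ∘ e) with hσ
  have hmono : Monotone ((f ∘ e) ∘ σ) := Tuple.monotone_sort (f ∘ e)
  refine ⟨fun i => e (σ ⟨min i (p - 1), by omega⟩), ?_, ?_, ?_⟩
  · have heq : (fun i : Fin p => e (σ ⟨min (i : ℕ) (p - 1), by omega⟩)) = ⇑(σ.trans e) := by
      funext i
      have : min (i : ℕ) (p - 1) = (i : ℕ) := by have := i.2; omega
      simp only [Equiv.trans_apply]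
      congr 1
      exact congrArg σ (Fin.ext this)
    rw [heq]
    exact (σ.trans e).bijective
  · intro i j hij hj
    have hi' : min i (p - 1) = i := by omega
    have hj' : min j (p - 1) = j := by omega
    have : (⟨min i (p-1), by omega⟩ : Fin p) ≤ ⟨min j (p-1), by omega⟩ := by
      simp [Fin.le_def, hi', hj', hij]
    exact hmono this
  · intro i j hij hj a
    have hi' : min i (p - 1) = i := by omega
    have hj' : min j (p - 1) = j := by omega
    have := σ.injective (e.injective a)
    rw [Fin.ext_iff] at this
    simp [hi', hj'] at this
    omega

lemma level_sums (u : ℕ → V) (hp : 1 ≤ Fintype.card V)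
    (hbij : Function.Bijective (fun i : Fin (Fintype.card V) => u i)) :
    ∑ t ∈ Finset.range (Fintype.card V - 1),
        ((level G (u t) : ℤ) + (level G (u (t + 1)) : ℤ))
      = 2 * (totalLevel G : ℤ) - level G (u 0) - level G (u (Fintype.card V - 1)) := by
  set p := Fintype.card V with hpdef
  have htot : (totalLevel G : ℤ) = ∑ t ∈ Finset.range p, (level G (u t) : ℤ) := by
    have h1 : ∑ i : Fin p, (level G (u i) : ℤ) = ∑ v : V, (level G v : ℤ) :=
      Function.Bijective.sum_comp hbij (fun v => (level G v : ℤ))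
    have h2 : ∑ t ∈ Finset.range p, (level G (u t) : ℤ) = ∑ i : Fin p, (level G (u i) : ℤ) :=
      (Fin.sum_univ_eq_sum_range (fun t => (level G (u t) : ℤ)) p).symm
    rw [totalLevel]
    push_cast
    rw [h2, h1]
  have hA : ∑ t ∈ Finset.range p, (level G (u t) : ℤ)
      = (∑ t ∈ Finset.range (p - 1), (level G (u t) : ℤ)) + level G (u (p - 1)) := by
    have : p = (p - 1) + 1 := by omega
    rw [this, Finset.sum_range_succ]
    congr 1 <;> rw [← this]
  have hB : ∑ t ∈ Finset.range p, (level G (u t) : ℤ)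
      = (∑ t ∈ Finset.range (p - 1), (level G (u (t + 1)) : ℤ)) + level G (u 0) := by
    have h : p = (p - 1) + 1 := by omega
    rw [h, Finset.sum_range_succ']
    rw [← h]
  rw [Finset.sum_add_distrib]
  omega

lemma eps_le_level_sum (hG : IsBlockGraph G) [Nonempty V] {x y : V} (hxy : x ≠ y) :
    (eps G : ℤ) ≤ level G x + level G y := by
  by_cases h1 : (weightCenters G).ncard = 1
  · obtain ⟨w, hlev, hzero⟩ := eps_one_level hG h1
    have heps : eps G = 1 := by simp [eps, h1]
    rw [heps]
    by_contra hcon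
    push_neg at hcon
    have hx0 : level G x = 0 := by omega
    have hy0 : level G y = 0 := by omega
    exact hxy ((hzero x hx0).trans (hzero y hy0).symm)
  · simp only [eps, if_neg h1]
    positivity

lemma radio_sorted (hG : IsBlockGraph G) (hd : 2 ≤ diam G)
    (f : V → ℕ) (hf : IsRadioLabeling G f) :
    ((Fintype.card V : ℤ) - 1) * ((diam G : ℤ) + (eps G : ℤ)) - 2 * (totalLevel G : ℤ)
        + (eps G : ℤ) ≤ (span f : ℤ) ∧
    ((span f : ℤ) = ((Fintype.card V : ℤ) - 1) * ((diam G : ℤ) + (eps G : ℤ))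
        - 2 * (totalLevel G : ℤ) + (eps G : ℤ) →
      ∃ u : ℕ → V, Function.Bijective (fun i : Fin (Fintype.card V) => u i) ∧
        (level G (u 0) + level G (u (Fintype.card V - 1)) = eps G) ∧
        (∀ i j : ℕ, i < j → j ≤ Fintype.card V - 1 →
          (∑ t ∈ Finset.Ico i j, ((level G (u t) : ℤ) + (level G (u (t + 1)) : ℤ)))
              - ((j : ℤ) - (i : ℤ)) * ((diam G : ℤ) + (eps G : ℤ)) + (diam G : ℤ) + 1
            ≤ (G.dist (u i) (u j) : ℤ))) := by
  have hp2 : 2 ≤ Fintype.card V := two_le_card hd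
  haveI : Nonempty V := Fintype.card_pos_iff.mp (by omega)
  set p := Fintype.card V with hpdef
  obtain ⟨u, hbij, hmono, hinj⟩ := exists_sorted f
  set d : ℤ := (diam G : ℤ) with hddef
  set ε : ℤ := (eps G : ℤ) with hedef
  set L : ℕ → ℤ := fun t => (level G (u t) : ℤ) with hLdef
  set δ : ℕ → ℤ := fun t => (f (u (t + 1)) : ℤ) - (f (u t) : ℤ) with hδdef
  set c : ℕ → ℤ := fun t => d + ε - L t - L (t + 1) with hcdef
  -- consecutive bounds
  have hkey : ∀ i j : ℕ, i < j → j ≤ p - 1 →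
      d + 1 - G.dist (u i) (u j) ≤ (f (u j) : ℤ) - (f (u i) : ℤ) := by
    intro i j hij hj
    have hne := hinj i j hij hj
    have hle := hmono i j (le_of_lt hij) hj
    have h1 := hf (u i) (u j) hne
    have hmax : max (f (u i) - f (u j)) (f (u j) - f (u i)) = f (u j) - f (u i) := by
      omega
    rw [hmax] at h1
    have h2 : (↑(f (u j) - f (u i)) : ℤ) = (f (u j) : ℤ) - f (u i) := by
      push_cast [hle]; ring
    push_cast at h1 ⊢
    omega
  have hδc : ∀ t, t < p - 1 → c t ≤ δ t := by
    intro t ht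
    have h1 := hkey t (t + 1) (by omega) (by omega)
    have h2 := key_ineq hG (u t) (u (t + 1))
    simp only [hδdef, hcdef, hLdef, hddef, hedef]
    push_cast at h1 h2 ⊢
    omega
  -- telescoping
  have htel : ∀ i j : ℕ, i ≤ j → (f (u j) : ℤ) - (f (u i) : ℤ) = ∑ t ∈ Finset.Ico i j, δ t := by
    intro i j hij
    rw [Finset.sum_Ico_eq_sub _ hij, Finset.sum_range_sub (fun n => (f (u n) : ℤ)),
      Finset.sum_range_sub (fun n => (f (u n) : ℤ))]
    ring
  -- span equals extremes
  have hspan : (span f : ℤ) = (f (u (p - 1)) : ℤ) - (f (u 0) : ℤ) := by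
    have hv : ∀ v : V, ∃ i : ℕ, i ≤ p - 1 ∧ u i = v := by
      intro v
      obtain ⟨i, hi⟩ := hbij.2 v
      exact ⟨(i : ℕ), by have := i.2; omega, hi⟩
    have hmin : ∀ v, f (u 0) ≤ f v := by
      intro v
      obtain ⟨i, hi, rfl⟩ := hv v
      exact hmono 0 i (Nat.zero_le _) hi
    have hmax : ∀ v, f v ≤ f (u (p - 1)) := by
      intro v
      obtain ⟨i, hi, rfl⟩ := hv v
      exact hmono i (p - 1) hi le_rfl
    rw [span_eq_of_min_max hmin hmax]
    push_cast [hmin (u (p - 1))]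
    ring
  have hsumc : ∑ t ∈ Finset.range (p - 1), c t
      = ((p : ℤ) - 1) * (d + ε) - 2 * (totalLevel G : ℤ) + (L 0 + L (p - 1)) := by
    have hls := level_sums (G := G) u (by omega) hbij
    have hadd : ∑ t ∈ Finset.range (p - 1), (L t + L (t + 1))
        = 2 * (totalLevel G : ℤ) - L 0 - L (p - 1) := by
      simpa only [hLdef, ← hpdef] using hls
    have hcast : ((p - 1 : ℕ) : ℤ) = (p : ℤ) - 1 := by omega
    calc ∑ t ∈ Finset.range (p - 1), c t
        = ∑ t ∈ Finset.range (p - 1), ((d + ε) - (L t + L (t + 1))) := by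
          refine Finset.sum_congr rfl fun t _ => ?_
          simp only [hcdef]; ring
      _ = (p - 1 : ℕ) • (d + ε) - ∑ t ∈ Finset.range (p - 1), (L t + L (t + 1)) := by
          rw [Finset.sum_sub_distrib, Finset.sum_const, Finset.card_range]
      _ = ((p : ℤ) - 1) * (d + ε) - (2 * (totalLevel G : ℤ) - L 0 - L (p - 1)) := by
          rw [hadd, nsmul_eq_mul, hcast]
      _ = _ := by ring
  have hsumδ : ∑ t ∈ Finset.range (p - 1), δ t = (span f : ℤ) := by
    rw [Finset.range_eq_Ico, hspan]
    exact (htel 0 (p - 1) (by omega)).symm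
  have hcle : ∑ t ∈ Finset.range (p - 1), c t ≤ ∑ t ∈ Finset.range (p - 1), δ t :=
    Finset.sum_le_sum fun t ht => hδc t (Finset.mem_range.mp ht)
  have heps : ε ≤ L 0 + L (p - 1) := by
    have hne : u 0 ≠ u (p - 1) := hinj 0 (p - 1) (by omega) le_rfl
    exact eps_le_level_sum hG hne
  constructor
  · rw [← hsumδ]
    calc ((p : ℤ) - 1) * (d + ε) - 2 * (totalLevel G : ℤ) + ε
        ≤ ((p : ℤ) - 1) * (d + ε) - 2 * (totalLevel G : ℤ) + (L 0 + L (p - 1)) := by omega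
      _ = ∑ t ∈ Finset.range (p - 1), c t := hsumc.symm
      _ ≤ ∑ t ∈ Finset.range (p - 1), δ t := hcle
  · intro hopt
    have hsum_eq : ∑ t ∈ Finset.range (p - 1), δ t = ∑ t ∈ Finset.range (p - 1), c t := by
      rw [hsumδ, hopt]
      have := hsumc
      omega
    have hpt : ∀ t ∈ Finset.range (p - 1), δ t = c t := fun t ht =>
      ((Finset.sum_eq_sum_iff_of_le fun t ht => hδc t (Finset.mem_range.mp ht)).mp
        hsum_eq.symm t ht).symm
    have hLeps : L 0 + L (p - 1) = ε := by
      rw [hsumδ, hopt] at hsum_eq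
      omega
    refine ⟨u, hbij, ?_, ?_⟩
    · have : ((level G (u 0) + level G (u (p - 1)) : ℕ) : ℤ) = (eps G : ℤ) := by
        push_cast
        simpa [hLdef, hedef] using hLeps
      exact_mod_cast this
    · intro i j hij hj
      have h1 := hkey i j hij hj
      have h2 : (f (u j) : ℤ) - (f (u i) : ℤ) = ∑ t ∈ Finset.Ico i j, c t := by
        rw [htel i j (le_of_lt hij)]
        refine Finset.sum_congr rfl fun t ht => ?_
        have := Finset.mem_Ico.mp ht
        exact hpt t (Finset.mem_range.mpr (by omega))
      have h3 : ∑ t ∈ Finset.Ico i j, c t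
          = ((j : ℤ) - (i : ℤ)) * (d + ε) - ∑ t ∈ Finset.Ico i j, (L t + L (t + 1)) := by
        have hcast : ((j - i : ℕ) : ℤ) = (j : ℤ) - (i : ℤ) := by omega
        calc ∑ t ∈ Finset.Ico i j, c t
            = ∑ t ∈ Finset.Ico i j, ((d + ε) - (L t + L (t + 1))) := by
              refine Finset.sum_congr rfl fun t _ => ?_
              simp only [hcdef]; ring
          _ = (j - i : ℕ) • (d + ε) - ∑ t ∈ Finset.Ico i j, (L t + L (t + 1)) := by
              rw [Finset.sum_sub_distrib, Finset.sum_const, Nat.card_Ico]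
          _ = _ := by rw [nsmul_eq_mul, hcast]
      have hgoal : (∑ t ∈ Finset.Ico i j, (L t + L (t + 1)))
          - ((j : ℤ) - (i : ℤ)) * (d + ε) + d + 1 ≤ (G.dist (u i) (u j) : ℤ) := by
        omega
      simpa [hLdef, hddef, hedef] using hgoal

lemma upper (hG : IsBlockGraph G) (hd : 2 ≤ diam G) (u : ℕ → V)
    (hbij : Function.Bijective (fun i : Fin (Fintype.card V) => u i))
    (hlev : level G (u 0) + level G (u (Fintype.card V - 1)) = eps G)
    (hineq : ∀ i j : ℕ, i < j → j ≤ Fintype.card V - 1 →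
      (∑ t ∈ Finset.Ico i j, ((level G (u t) : ℤ) + (level G (u (t + 1)) : ℤ)))
          - ((j : ℤ) - (i : ℤ)) * ((diam G : ℤ) + (eps G : ℤ)) + (diam G : ℤ) + 1
        ≤ (G.dist (u i) (u j) : ℤ)) :
    ∃ F : V → ℕ, IsRadioLabeling G F ∧
      (span F : ℤ) = ((Fintype.card V : ℤ) - 1) * ((diam G : ℤ) + (eps G : ℤ))
        - 2 * (totalLevel G : ℤ) + (eps G : ℤ) := by
  have hp2 : 2 ≤ Fintype.card V := two_le_card hd
  haveI : Nonempty V := Fintype.card_pos_iff.mp (by omega)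
  set p := Fintype.card V with hpdef
  set d : ℤ := (diam G : ℤ) with hddef
  set ε : ℤ := (eps G : ℤ) with hedef
  set L : ℕ → ℤ := fun t => (level G (u t) : ℤ) with hLdef
  set c : ℕ → ℤ := fun t => d + ε - L t - L (t + 1) with hcdef
  have hc1 : ∀ t : ℕ, t + 1 ≤ p - 1 → 1 ≤ c t := by
    intro t ht
    have h1 := hineq t (t + 1) (by omega) ht
    rw [Nat.Ico_succ_singleton, Finset.sum_singleton] at h1
    have e1 : ((t + 1 : ℕ) : ℤ) - (t : ℕ) = 1 := by push_cast; ring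
    rw [e1, one_mul] at h1
    have hdle : (G.dist (u t) (u (t + 1)) : ℤ) ≤ d := by
      rw [hddef]; exact_mod_cast dist_le_diam (u t) (u (t + 1))
    simp only [hcdef, hLdef]
    omega
  set g : ℕ → ℤ := fun n => ∑ t ∈ Finset.range n, c t with hgdef
  have hgdiff : ∀ i j : ℕ, i ≤ j → g j - g i = ∑ t ∈ Finset.Ico i j, c t :=
    fun i j hij => by rw [Finset.sum_Ico_eq_sub _ hij]
  have hgmono : ∀ i j : ℕ, i ≤ j → j ≤ p - 1 → g i ≤ g j := by
    intro i j hij hj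
    have h0 : 0 ≤ ∑ t ∈ Finset.Ico i j, c t := by
      refine Finset.sum_nonneg fun t ht => ?_
      have := Finset.mem_Ico.mp ht
      have := hc1 t (by omega)
      omega
    have := hgdiff i j hij
    omega
  have hg0 : g 0 = 0 := by simp [hgdef]
  have hgnn : ∀ i : ℕ, i ≤ p - 1 → 0 ≤ g i := by
    intro i hi
    have := hgmono 0 i (Nat.zero_le _) hi
    omega
  set E := Equiv.ofBijective _ hbij with hEdef
  set F : V → ℕ := fun v => (g ((E.symm v : Fin p) : ℕ)).toNat with hFdef
  have hFu : ∀ i : Fin p, (F (u (i : ℕ)) : ℤ) = g (i : ℕ) := by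
    intro i
    have h1 : E.symm (u (i : ℕ)) = i := by
      rw [Equiv.symm_apply_eq]; rfl
    simp only [hFdef, h1]
    exact Int.toNat_of_nonneg (hgnn _ (by have := i.2; omega))
  have hpair : ∀ a b : Fin p, (a : ℕ) < (b : ℕ) →
      ((diam G : ℤ) + 1 ≤ G.dist (u (a : ℕ)) (u (b : ℕ)) + (F (u (b : ℕ)) : ℤ) - F (u (a : ℕ)))
        ∧ F (u (a : ℕ)) ≤ F (u (b : ℕ)) := by
    intro a b hab
    have hb1 : (b : ℕ) ≤ p - 1 := by have := b.2; omega
    have h1 := hineq a b hab hb1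
    have h2 : (F (u (b : ℕ)) : ℤ) - F (u (a : ℕ)) = ∑ t ∈ Finset.Ico (a : ℕ) (b : ℕ), c t := by
      rw [hFu a, hFu b]
      exact hgdiff _ _ (le_of_lt hab)
    have h3 : ∑ t ∈ Finset.Ico (a : ℕ) (b : ℕ), c t
        = (((b : ℕ) : ℤ) - ((a : ℕ) : ℤ)) * (d + ε)
          - ∑ t ∈ Finset.Ico (a : ℕ) (b : ℕ), (L t + L (t + 1)) := by
      have hcast : (((b : ℕ) - (a : ℕ) : ℕ) : ℤ) = ((b : ℕ) : ℤ) - ((a : ℕ) : ℤ) := by omega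
      calc ∑ t ∈ Finset.Ico (a : ℕ) (b : ℕ), c t
          = ∑ t ∈ Finset.Ico (a : ℕ) (b : ℕ), ((d + ε) - (L t + L (t + 1))) := by
            refine Finset.sum_congr rfl fun t _ => ?_
            simp only [hcdef]; ring
        _ = ((b : ℕ) - (a : ℕ) : ℕ) • (d + ε)
            - ∑ t ∈ Finset.Ico (a : ℕ) (b : ℕ), (L t + L (t + 1)) := by
            rw [Finset.sum_sub_distrib, Finset.sum_const, Nat.card_Ico]
        _ = _ := by rw [nsmul_eq_mul, hcast]
    have hLsum : (∑ t ∈ Finset.Ico (a : ℕ) (b : ℕ), (L t + L (t + 1)))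
        - (((b : ℕ) : ℤ) - ((a : ℕ) : ℤ)) * (d + ε) + d + 1
          ≤ (G.dist (u (a : ℕ)) (u (b : ℕ)) : ℤ) := by
      simpa only [hLdef, hddef, hedef] using h1
    constructor
    · simp only [hddef, hedef] at h2 h3 hLsum ⊢
      linarith [h2, h3, hLsum]
    · have : (F (u (a : ℕ)) : ℤ) ≤ F (u (b : ℕ)) := by
        rw [hFu a, hFu b]
        exact hgmono _ _ (le_of_lt hab) hb1
      exact_mod_cast this
  refine ⟨F, ?_, ?_⟩
  · intro v w hvw
    set a := E.symm v with ha
    set b := E.symm w with hb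
    have hva : v = u (a : ℕ) := (Equiv.apply_symm_apply E v).symm
    have hwb : w = u (b : ℕ) := (Equiv.apply_symm_apply E w).symm
    have hab : (a : ℕ) ≠ (b : ℕ) := by
      intro h
      exact hvw (by rw [hva, hwb, h])
    rcases Nat.lt_or_ge (a : ℕ) (b : ℕ) with h | h
    · obtain ⟨h4, h5⟩ := hpair a b h
      rw [hva, hwb]
      omega
    · have hba : (b : ℕ) < (a : ℕ) := by omega
      obtain ⟨h4, h5⟩ := hpair b a hba
      have hdc : G.dist (u (a : ℕ)) (u (b : ℕ)) = G.dist (u (b : ℕ)) (u (a : ℕ)) :=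
        SimpleGraph.dist_comm
      rw [hva, hwb, hdc]
      omega
  · have hlast : (p - 1 : ℕ) = ((⟨p - 1, by omega⟩ : Fin p) : ℕ) := rfl
    have hF0 : F (u 0) = 0 := by
      have h0 : (0 : ℕ) = ((⟨0, by omega⟩ : Fin p) : ℕ) := rfl
      have := hFu ⟨0, by omega⟩
      rw [← h0, hg0] at this
      omega
    have hmax : ∀ v, F v ≤ F (u (p - 1)) := by
      intro v
      have hva : v = u ((E.symm v : Fin p) : ℕ) := (Equiv.apply_symm_apply E v).symm
      have h1 : (F v : ℤ) ≤ F (u (p - 1)) := by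
        rw [hva, hFu (E.symm v), hlast, hFu ⟨p - 1, by omega⟩]
        exact hgmono _ _ (by have := (E.symm v).2; omega) le_rfl
      exact_mod_cast h1
    have hmin : ∀ v, F (u 0) ≤ F v := by
      intro v; rw [hF0]; exact Nat.zero_le _
    have hspan := span_eq_of_min_max hmin hmax
    rw [hspan, hF0, Nat.sub_zero]
    have hfin : (F (u (p - 1)) : ℤ) = g (p - 1) := by
      rw [hlast, hFu ⟨p - 1, by omega⟩]
    rw [hfin]
    -- compute g (p-1)
    have hls := level_sums (G := G) u (by omega) hbij
    have hadd : ∑ t ∈ Finset.range (p - 1), (L t + L (t + 1))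
        = 2 * (totalLevel G : ℤ) - L 0 - L (p - 1) := by
      simpa only [hLdef, ← hpdef] using hls
    have hcast : ((p - 1 : ℕ) : ℤ) = (p : ℤ) - 1 := by omega
    have hlev' : L 0 + L (p - 1) = ε := by
      simp only [hLdef, hedef]
      exact_mod_cast congrArg (Nat.cast : ℕ → ℤ) hlev
    calc g (p - 1)
        = ∑ t ∈ Finset.range (p - 1), ((d + ε) - (L t + L (t + 1))) := by
          refine Finset.sum_congr rfl fun t _ => ?_
          simp only [hcdef]; ring
      _ = (p - 1 : ℕ) • (d + ε) - ∑ t ∈ Finset.range (p - 1), (L t + L (t + 1)) := by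
          rw [Finset.sum_sub_distrib, Finset.sum_const, Finset.card_range]
      _ = ((p : ℤ) - 1) * (d + ε) - (2 * (totalLevel G : ℤ) - L 0 - L (p - 1)) := by
          rw [hadd, nsmul_eq_mul, hcast]
      _ = ((p : ℤ) - 1) * (d + ε) - 2 * (totalLevel G : ℤ) + ε := by
          rw [← hlev']; ring

end Lemmas

/-- For a block graph `G` of order `p` and diameter at least 2, the radio number
equals the lower bound iff there is an ordering `u_0, …, u_{p-1}` of the vertices with
`L(u_0)+L(u_{p-1}) = ε(G)` and, for all `i < j`,
`d(u_i,u_j) ≥ Σ_{t=i}^{j-1}[L(u_t)+L(u_{t+1})] - (j-i)(d(G)+ε(G)) + d(G) + 1`. -/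
theorem stmt6 {V : Type*} [Fintype V] (G : SimpleGraph V) (hG : IsBlockGraph G)
    (hd : 2 ≤ diam G) :
    lbEq G ↔ ∃ u : ℕ → V,
      Function.Bijective (fun i : Fin (Fintype.card V) => u i) ∧
      (level G (u 0) + level G (u (Fintype.card V - 1)) = eps G) ∧
      (∀ i j : ℕ, i < j → j ≤ Fintype.card V - 1 →
        (∑ t ∈ Finset.Ico i j, ((level G (u t) : ℤ) + (level G (u (t + 1)) : ℤ)))
            - ((j : ℤ) - (i : ℤ)) * ((diam G : ℤ) + (eps G : ℤ)) + (diam G : ℤ) + 1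
          ≤ (G.dist (u i) (u j) : ℤ)) := by
  have hp2 : 2 ≤ Fintype.card V := two_le_card hd
  haveI : Nonempty V := Fintype.card_pos_iff.mp (by omega)
  constructor
  · intro hlb
    obtain ⟨f, hf, hspan⟩ := rn_spec hd
    refine (radio_sorted hG hd f hf).2 ?_
    rw [hspan]
    exact hlb
  · rintro ⟨u, hbij, hlev, hineq⟩
    obtain ⟨F, hF, hspanF⟩ := upper hG hd u hbij hlev hineq
    have hle : rn G ≤ span F := Nat.sInf_le ⟨F, hF, rfl⟩
    obtain ⟨f0, hf0, hs0⟩ := rn_spec hd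
    have hge := (radio_sorted hG hd f0 hf0).1
    rw [hs0] at hge
    unfold lbEq
    have h1 : (rn G : ℤ) ≤ (span F : ℤ) := by exact_mod_cast hle
    rw [hspanF] at h1
    linarith

end RadioLabeling
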